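/- Suppose a ∈ ℝ^n and B ∈ ℝ^{n×n²} satisfy e = a + B(e ⊗ e). Let x̂ ∈ ℝ^n satisfy 0 ≤ x̂ < e entrywise, assume L̂ = I − B(x̂ ⊗ I + I ⊗ x̂) is invertible, and set r = x̂ − a − B(x̂ ⊗ x̂), γ = ‖r‖, ℓ̂ = ‖L̂⁻¹‖, b = ‖B‖. If 1 − 4ℓ̂²bγ ≥ 0 and √(1 − 4ℓ̂²bγ) > max{ 1 − 2ℓ̂b(1 − ‖e − x̂‖), 1 − 2ℓ̂b(1 − ‖x̂‖) }, then there exists x ∈ ℝ^n with x = a + B(x ⊗ x), 0 < x < e entrywise, and ‖x̂ − x‖ ≤ ω*, where ω* = 2ℓ̂γ / (1 + √(1 − 4ℓ̂²bγ)). In particular, if the QVE x = a + B(x ⊗ x) has at most one solution in {x : 0 ≤ x < e} and x* is a solution with 0 ≤ x* < e, then ‖x̂ − x*‖ ≤ ω*. -/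

import Mathlib

open Matrix

noncomputable section

/-- Decode an index `p ∈ Fin (n*n)` (row-major: `p = n*i + j`) into the pair `(i, j)`. -/
def kronDecode {n : ℕ} (p : Fin (n * n)) : Fin n × Fin n :=
  ⟨⟨(p : ℕ) / n, Nat.div_lt_of_lt_mul p.isLt⟩,
   ⟨(p : ℕ) % n, Nat.mod_lt _ (by
      rcases Nat.eq_zero_or_pos n with h | h
      · exact absurd p.isLt (by simp [h])
      · exact h)⟩⟩

/-- Kronecker product of two vectors in `ℝ^n`, as a vector in `ℝ^(n²)`:
`(u ⊗ v)_{n(i-1)+j} = u_i v_j` (row-major). -/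
def kron {n : ℕ} (u v : Fin n → ℝ) : Fin (n * n) → ℝ :=
  fun p => u (kronDecode p).1 * v (kronDecode p).2

/-- Kronecker product `u ⊗ I` of a vector `u ∈ ℝ^n` with the `n×n` identity:
an `n²×n` matrix with entry `u_i · δ_{jk}` at row `(i,j)`, column `k`. -/
def kronVecId {n : ℕ} (u : Fin n → ℝ) : Matrix (Fin (n * n)) (Fin n) ℝ :=
  fun p k => u (kronDecode p).1 * (if (kronDecode p).2 = k then (1 : ℝ) else 0)

/-- Kronecker product `I ⊗ u` of the `n×n` identity with a vector `u ∈ ℝ^n`: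
an `n²×n` matrix with entry `δ_{ik} · u_j` at row `(i,j)`, column `k`. -/
def kronIdVec {n : ℕ} (u : Fin n → ℝ) : Matrix (Fin (n * n)) (Fin n) ℝ :=
  fun p k => (if (kronDecode p).1 = k then (1 : ℝ) else 0) * u (kronDecode p).2

/-- The operator ∞-norm of a real matrix: the maximum absolute row sum.
(The corresponding vector norm on `Fin m → ℝ` is the sup norm `‖·‖`.) -/
def matNorm {m k : ℕ} (M : Matrix (Fin m) (Fin k) ℝ) : ℝ :=
  ⨆ i, ∑ j, |M i j|


lemma row_sum_le_matNorm {m k : ℕ} (M : Matrix (Fin m) (Fin k) ℝ) (i : Fin m) :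
    ∑ j, |M i j| ≤ matNorm M := by
  rw [matNorm]
  exact le_ciSup (f := fun i => ∑ j, |M i j|) (Set.Finite.bddAbove (Set.finite_range _)) i

lemma matNorm_nonneg {m k : ℕ} [Nonempty (Fin m)] (M : Matrix (Fin m) (Fin k) ℝ) :
    0 ≤ matNorm M := by
  obtain ⟨i⟩ := (inferInstance : Nonempty (Fin m))
  exact le_trans (Finset.sum_nonneg fun j _ => abs_nonneg _) (row_sum_le_matNorm M i)

lemma norm_mulVec_le {m k : ℕ} [Nonempty (Fin m)] (M : Matrix (Fin m) (Fin k) ℝ)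
    (v : Fin k → ℝ) : ‖M *ᵥ v‖ ≤ matNorm M * ‖v‖ := by
  rw [pi_norm_le_iff_of_nonneg (mul_nonneg (matNorm_nonneg M) (norm_nonneg v))]
  intro i
  calc ‖(M *ᵥ v) i‖ = |∑ j, M i j * v j| := by simp [mulVec, dotProduct, Real.norm_eq_abs]
    _ ≤ ∑ j, |M i j * v j| := Finset.abs_sum_le_sum_abs _ _
    _ ≤ ∑ j, |M i j| * ‖v‖ := by
        refine Finset.sum_le_sum fun j _ => ?_
        rw [abs_mul]
        exact mul_le_mul_of_nonneg_left (norm_le_pi_norm v j) (abs_nonneg _)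
    _ = (∑ j, |M i j|) * ‖v‖ := by rw [Finset.sum_mul]
    _ ≤ matNorm M * ‖v‖ :=
        mul_le_mul_of_nonneg_right (row_sum_le_matNorm M i) (norm_nonneg v)

lemma norm_kron_le {n : ℕ} (u v : Fin n → ℝ) : ‖kron u v‖ ≤ ‖u‖ * ‖v‖ := by
  rw [pi_norm_le_iff_of_nonneg (mul_nonneg (norm_nonneg u) (norm_nonneg v))]
  intro p
  calc ‖kron u v p‖ = |u (kronDecode p).1| * |v (kronDecode p).2| := by
        simp [kron, Real.norm_eq_abs, abs_mul]
    _ ≤ ‖u‖ * ‖v‖ :=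
        mul_le_mul (norm_le_pi_norm u _) (norm_le_pi_norm v _) (abs_nonneg _) (norm_nonneg u)

lemma kron_pair {n : ℕ} (u h : Fin n → ℝ) :
    (kronVecId u + kronIdVec u) *ᵥ h = kron u h + kron h u := by
  funext p
  simp [mulVec, dotProduct, kronVecId, kronIdVec, kron, add_mul, mul_ite, ite_mul,
    Finset.sum_add_distrib, Finset.sum_ite_eq, mul_comm, mul_add]

lemma kron_expand {n : ℕ} (u h : Fin n → ℝ) :
    kron (u + h) (u + h) = kron u u + (kron u h + kron h u) + kron h h := by
  funext p; simp only [kron, Pi.add_apply]; ring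

lemma kron_sq_sub {n : ℕ} (u v : Fin n → ℝ) :
    kron u u - kron v v = kron u (u - v) + kron (u - v) v := by
  funext p; simp only [kron, Pi.add_apply, Pi.sub_apply]; ring

def omegaSeq (c d : ℝ) : ℕ → ℝ
  | 0 => 0
  | k + 1 => c + d * (omegaSeq c d k) ^ 2

lemma omegaSeq_nonneg {c d : ℝ} (hc : 0 ≤ c) (hd : 0 ≤ d) : ∀ k, 0 ≤ omegaSeq c d k
  | 0 => le_refl 0
  | k + 1 => by
      have := omegaSeq_nonneg hc hd k
      simp only [omegaSeq]; positivity

lemma omegaSeq_le {c d ω : ℝ} (hc : 0 ≤ c) (hd : 0 ≤ d) (hω : 0 ≤ ω)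
    (hfix : c + d * ω ^ 2 = ω) : ∀ k, omegaSeq c d k ≤ ω
  | 0 => hω
  | k + 1 => by
      have h1 := omegaSeq_le hc hd hω hfix k
      have h0 := omegaSeq_nonneg hc hd k
      have hm : omegaSeq c d k * omegaSeq c d k ≤ ω * ω := mul_le_mul h1 h1 h0 hω
      simp only [omegaSeq]
      nlinarith [mul_le_mul_of_nonneg_left hm hd]

lemma omegaSeq_mono {c d : ℝ} (hc : 0 ≤ c) (hd : 0 ≤ d) :
    ∀ k, omegaSeq c d k ≤ omegaSeq c d (k + 1)
  | 0 => by simp only [omegaSeq]; positivity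
  | k + 1 => by
      have h1 := omegaSeq_mono hc hd k
      have h0 := omegaSeq_nonneg hc hd k
      have h0' := omegaSeq_nonneg hc hd (k + 1)
      have hm : omegaSeq c d k * omegaSeq c d k ≤ omegaSeq c d (k+1) * omegaSeq c d (k+1) :=
        mul_le_mul h1 h1 h0 h0'
      simp only [omegaSeq] at *
      nlinarith [mul_le_mul_of_nonneg_left hm hd]

lemma continuous_mulVec {m k : ℕ} (M : Matrix (Fin m) (Fin k) ℝ) :
    Continuous fun v : Fin k → ℝ => M *ᵥ v := by
  refine continuous_pi fun i => ?_
  simp only [mulVec, dotProduct]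
  exact continuous_finset_sum _ fun j _ => continuous_const.mul (continuous_apply j)

lemma continuous_kron_diag {n : ℕ} : Continuous fun h : Fin n → ℝ => kron h h := by
  refine continuous_pi fun p => ?_
  exact (continuous_apply _).mul (continuous_apply _)

set_option maxHeartbeats 2000000 in
/-- Theorem 2.7 of the paper: under `e = a + B(e⊗e)`, if `0 ≤ x̂ < e`
entrywise, `L̂ = I − B(x̂⊗I + I⊗x̂)` is invertible, `r = x̂ − a − B(x̂⊗x̂)`, `γ = ‖r‖`,
`ℓ̂ = ‖L̂⁻¹‖`, `b = ‖B‖`, and `1 − 4ℓ̂²bγ ≥ 0` and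
`√(1 − 4ℓ̂²bγ) > max{1 − 2ℓ̂b(1 − ‖e − x̂‖), 1 − 2ℓ̂b(1 − ‖x̂‖)}`, then the QVE has a
solution `x` with `0 < x < e` entrywise and `‖x̂ − x‖ ≤ ω* = 2ℓ̂γ/(1 + √(1 − 4ℓ̂²bγ))`;
in particular, if the QVE has at most one solution in `{x : 0 ≤ x < e}` and `x*` is
such a solution, then `‖x̂ − x*‖ ≤ ω*`. -/
theorem stmt4 {n : ℕ} (hn : 1 ≤ n)
    (a : Fin n → ℝ) (B : Matrix (Fin n) (Fin (n * n)) ℝ)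
    (e : Fin n → ℝ) (he : e = fun _ => (1 : ℝ))
    (heq : e = a + B *ᵥ kron e e)
    (xh : Fin n → ℝ)
    (hxh0 : ∀ i, 0 ≤ xh i) (hxh1 : ∀ i, xh i < e i)
    (Lh : Matrix (Fin n) (Fin n) ℝ)
    (hLh : Lh = 1 - B * (kronVecId xh + kronIdVec xh))
    (hLhinv : IsUnit Lh)
    (r : Fin n → ℝ) (hr : r = xh - a - B *ᵥ kron xh xh)
    (γ ℓh b : ℝ)
    (hγ : γ = ‖r‖) (hℓh : ℓh = matNorm Lh⁻¹) (hb : b = matNorm B)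
    (hdisc : 0 ≤ 1 - 4 * ℓh ^ 2 * b * γ)
    (hcond : max (1 - 2 * ℓh * b * (1 - ‖e - xh‖)) (1 - 2 * ℓh * b * (1 - ‖xh‖)) <
      Real.sqrt (1 - 4 * ℓh ^ 2 * b * γ)) :
    (∃ x : Fin n → ℝ, x = a + B *ᵥ kron x x ∧ (∀ i, 0 < x i ∧ x i < e i) ∧
      ‖xh - x‖ ≤ 2 * ℓh * γ / (1 + Real.sqrt (1 - 4 * ℓh ^ 2 * b * γ))) ∧
    (∀ xs : Fin n → ℝ,
      (∀ x y : Fin n → ℝ,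
        x = a + B *ᵥ kron x x → (∀ i, 0 ≤ x i ∧ x i < e i) →
        y = a + B *ᵥ kron y y → (∀ i, 0 ≤ y i ∧ y i < e i) → x = y) →
      xs = a + B *ᵥ kron xs xs → (∀ i, 0 ≤ xs i ∧ xs i < e i) →
      ‖xh - xs‖ ≤ 2 * ℓh * γ / (1 + Real.sqrt (1 - 4 * ℓh ^ 2 * b * γ))) := by
  haveI : Nonempty (Fin n) := ⟨⟨0, hn⟩⟩
  have hγ0 : 0 ≤ γ := hγ ▸ norm_nonneg _
  have hℓ0 : 0 ≤ ℓh := hℓh ▸ matNorm_nonneg _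
  have hb0 : 0 ≤ b := hb ▸ matNorm_nonneg _
  set s := Real.sqrt (1 - 4 * ℓh ^ 2 * b * γ) with hsdef
  have hs0 : 0 ≤ s := Real.sqrt_nonneg _
  have hs2 : s ^ 2 = 1 - 4 * ℓh ^ 2 * b * γ := Real.sq_sqrt hdisc
  have hs1 : s ≤ 1 := by
    rw [hsdef]
    exact Real.sqrt_le_one.mpr (by nlinarith [mul_nonneg (mul_nonneg (sq_nonneg ℓh) hb0) hγ0])
  have hcx : 1 - 2 * ℓh * b * (1 - ‖xh‖) < s := (max_lt_iff.mp hcond).2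
  have hce : 1 - 2 * ℓh * b * (1 - ‖e - xh‖) < s := (max_lt_iff.mp hcond).1
  have hℓb : 0 < ℓh * b := by
    rcases lt_or_eq_of_le (mul_nonneg hℓ0 hb0) with h | h
    · exact h
    · exfalso
      have hz : 2 * ℓh * b * (1 - ‖xh‖) = 0 := by
        have : ℓh * b = 0 := h.symm
        calc 2 * ℓh * b * (1 - ‖xh‖) = 2 * (ℓh * b) * (1 - ‖xh‖) := by ring
          _ = 0 := by rw [this]; ring
      linarith
  have hℓpos : 0 < ℓh := by
    rcases lt_or_eq_of_le hℓ0 with h | h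
    · exact h
    · exfalso; rw [← h] at hℓb; simp at hℓb
  have hbpos : 0 < b := by
    rcases lt_or_eq_of_le hb0 with h | h
    · exact h
    · exfalso; rw [← h] at hℓb; simp at hℓb
  set ω : ℝ := (1 - s) / (2 * (ℓh * b)) with hωdef
  have hωeq : 2 * ℓh * γ / (1 + s) = ω := by
    rw [hωdef, div_eq_div_iff (by linarith) (by positivity)]
    linear_combination hs2
  have hω0 : 0 ≤ ω := div_nonneg (by linarith) (by positivity)
  have hfix : ℓh * γ + ℓh * b * ω ^ 2 = ω := by
    rw [hωdef]
    field_simp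
    nlinarith [hs2]
  have hωx : ω < 1 - ‖xh‖ := by
    rw [hωdef, div_lt_iff₀ (by positivity)]
    nlinarith [hcx]
  have hωe : ω < 1 - ‖e - xh‖ := by
    rw [hωdef, div_lt_iff₀ (by positivity)]
    nlinarith [hce]
  -- matrix inverse facts
  have hdet : IsUnit Lh.det := (Matrix.isUnit_iff_isUnit_det Lh).mp hLhinv
  have hLiL : Lh⁻¹ * Lh = 1 := Matrix.nonsing_inv_mul Lh hdet
  have hLLi : Lh * Lh⁻¹ = 1 := Matrix.mul_nonsing_inv Lh hdet
  -- the Newton-type map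
  set G : (Fin n → ℝ) → (Fin n → ℝ) :=
    fun x => x - Lh⁻¹ *ᵥ (x - a - B *ᵥ kron x x) with hG
  have keyG : ∀ h : Fin n → ℝ,
      G (xh + h) = xh + Lh⁻¹ *ᵥ (B *ᵥ kron h h - r) := by
    intro h
    have e1 : (xh + h) - a - B *ᵥ kron (xh + h) (xh + h)
        = r + Lh *ᵥ h - B *ᵥ kron h h := by
      rw [kron_expand, hr, hLh, ← kron_pair xh h]
      simp only [Matrix.mulVec_add, Matrix.sub_mulVec, Matrix.one_mulVec,
        ← Matrix.mulVec_mulVec]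
      abel
    rw [hG]
    simp only [e1]
    have e2 : Lh⁻¹ *ᵥ (r + Lh *ᵥ h - B *ᵥ kron h h)
        = Lh⁻¹ *ᵥ r + h - Lh⁻¹ *ᵥ (B *ᵥ kron h h) := by
      rw [Matrix.mulVec_sub, Matrix.mulVec_add, Matrix.mulVec_mulVec, hLiL,
        Matrix.one_mulVec]
    rw [e2, Matrix.mulVec_sub]
    abel
  -- basic bound
  have hGbound : ∀ h : Fin n → ℝ,
      ‖Lh⁻¹ *ᵥ (B *ᵥ kron h h - r)‖ ≤ ℓh * γ + ℓh * b * ‖h‖ ^ 2 := by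
    intro h
    calc ‖Lh⁻¹ *ᵥ (B *ᵥ kron h h - r)‖
        ≤ matNorm Lh⁻¹ * ‖B *ᵥ kron h h - r‖ := norm_mulVec_le _ _
      _ ≤ ℓh * (b * ‖h‖ ^ 2 + γ) := by
          rw [hℓh]
          refine mul_le_mul_of_nonneg_left ?_ (hℓh ▸ hℓ0)
          calc ‖B *ᵥ kron h h - r‖ ≤ ‖B *ᵥ kron h h‖ + ‖r‖ := norm_sub_le _ _
            _ ≤ b * ‖h‖ ^ 2 + γ := by
                refine add_le_add ?_ (le_of_eq hγ.symm)
                calc ‖B *ᵥ kron h h‖ ≤ matNorm B * ‖kron h h‖ := norm_mulVec_le _ _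
                  _ ≤ b * ‖h‖ ^ 2 := by
                      rw [hb, sq]
                      exact mul_le_mul_of_nonneg_left (norm_kron_le h h) (hb ▸ hb0)
      _ = ℓh * γ + ℓh * b * ‖h‖ ^ 2 := by ring
  -- iteration
  set xseq : ℕ → (Fin n → ℝ) := fun k => G^[k] xh with hxseq
  have hx0 : xseq 0 = xh := rfl
  have hxs : ∀ k, xseq (k + 1) = G (xseq k) := fun k => Function.iterate_succ_apply' G k xh
  set c : ℝ := ℓh * γ with hc
  set d : ℝ := ℓh * b with hd
  have hc0 : 0 ≤ c := mul_nonneg hℓ0 hγ0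
  have hd0 : 0 ≤ d := mul_nonneg hℓ0 hb0
  set ωs : ℕ → ℝ := omegaSeq c d with hωs
  have hωs0 : ωs 0 = 0 := rfl
  have hωsS : ∀ k, ωs (k + 1) = c + d * (ωs k) ^ 2 := fun k => rfl
  have hωs_nonneg : ∀ k, 0 ≤ ωs k := omegaSeq_nonneg hc0 hd0
  have hωs_le : ∀ k, ωs k ≤ ω := omegaSeq_le hc0 hd0 hω0 (by rw [hc, hd]; exact hfix)
  have hωs_mono1 : ∀ k, ωs k ≤ ωs (k + 1) := omegaSeq_mono hc0 hd0
  have hωs_mono : Monotone ωs := monotone_nat_of_le_succ hωs_mono1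
  have hiter : ∀ k, xseq (k + 1)
      = xh + Lh⁻¹ *ᵥ (B *ᵥ kron (xseq k - xh) (xseq k - xh) - r) := by
    intro k
    have h11 := keyG (xseq k - xh)
    rw [show xh + (xseq k - xh) = xseq k from by abel] at h11
    rw [hxs k, h11]
  have hnormbd : ∀ k, ‖xseq k - xh‖ ≤ ωs k := by
    intro k
    induction k with
    | zero => simp [hx0, hωs0]
    | succ k ih =>
      rw [hiter k, add_sub_cancel_left, hωsS k]
      calc ‖Lh⁻¹ *ᵥ (B *ᵥ kron (xseq k - xh) (xseq k - xh) - r)‖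
          ≤ ℓh * γ + ℓh * b * ‖xseq k - xh‖ ^ 2 := hGbound _
        _ ≤ c + d * (ωs k) ^ 2 := by
            rw [hc, hd]
            have h1 : ‖xseq k - xh‖ ^ 2 ≤ (ωs k) ^ 2 :=
              pow_le_pow_left₀ (norm_nonneg _) ih 2
            nlinarith [mul_le_mul_of_nonneg_left h1 hd0]
  have hdiffbd : ∀ k, ‖xseq (k + 1) - xseq k‖ ≤ ωs (k + 1) - ωs k := by
    intro k
    induction k with
    | zero =>
      have h0 : xseq 0 - xh = 0 := by rw [hx0]; abel
      rw [hiter 0, h0, hx0, add_sub_cancel_left]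
      calc ‖Lh⁻¹ *ᵥ (B *ᵥ kron 0 0 - r)‖
          ≤ ℓh * γ + ℓh * b * ‖(0 : Fin n → ℝ)‖ ^ 2 := hGbound _
        _ = ωs 1 - ωs 0 := by rw [hωsS 0, hωs0]; simp [hc]
    | succ k ih =>
      have hδ : (xseq (k + 1) - xh) - (xseq k - xh) = xseq (k + 1) - xseq k := by abel
      have hdecomp : xseq (k + 2) - xseq (k + 1)
          = Lh⁻¹ *ᵥ (B *ᵥ (kron (xseq (k+1) - xh) (xseq (k+1) - xh)
              - kron (xseq k - xh) (xseq k - xh))) := by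
        rw [hiter (k + 1), hiter k, add_sub_add_left_eq_sub, ← Matrix.mulVec_sub,
          sub_sub_sub_cancel_right, ← Matrix.mulVec_sub]
      rw [hdecomp, kron_sq_sub, hδ]
      have a1 : ‖xseq (k+1) - xh‖ ≤ ωs (k+1) := hnormbd (k+1)
      have a0 : ‖xseq k - xh‖ ≤ ωs k := hnormbd k
      have hsum : ‖kron (xseq (k+1) - xh) (xseq (k+1) - xseq k)
            + kron (xseq (k+1) - xseq k) (xseq k - xh)‖
          ≤ ωs (k+1) * (ωs (k+1) - ωs k) + (ωs (k+1) - ωs k) * ωs k := by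
        calc ‖kron (xseq (k+1) - xh) (xseq (k+1) - xseq k)
              + kron (xseq (k+1) - xseq k) (xseq k - xh)‖
            ≤ ‖kron (xseq (k+1) - xh) (xseq (k+1) - xseq k)‖
              + ‖kron (xseq (k+1) - xseq k) (xseq k - xh)‖ := norm_add_le _ _
          _ ≤ ‖xseq (k+1) - xh‖ * ‖xseq (k+1) - xseq k‖
              + ‖xseq (k+1) - xseq k‖ * ‖xseq k - xh‖ :=
              add_le_add (norm_kron_le _ _) (norm_kron_le _ _)
          _ ≤ ωs (k+1) * (ωs (k+1) - ωs k) + (ωs (k+1) - ωs k) * ωs k := by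
              have hδ0 : 0 ≤ ωs (k+1) - ωs k := by linarith [hωs_mono1 k]
              refine add_le_add ?_ ?_
              · exact mul_le_mul a1 ih (norm_nonneg _) (hωs_nonneg _)
              · exact mul_le_mul ih a0 (norm_nonneg _) hδ0
      calc ‖Lh⁻¹ *ᵥ (B *ᵥ (kron (xseq (k+1) - xh) (xseq (k+1) - xseq k)
              + kron (xseq (k+1) - xseq k) (xseq k - xh)))‖
          ≤ matNorm Lh⁻¹ * ‖B *ᵥ (kron (xseq (k+1) - xh) (xseq (k+1) - xseq k)
              + kron (xseq (k+1) - xseq k) (xseq k - xh))‖ := norm_mulVec_le _ _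
        _ ≤ ℓh * (b * (ωs (k+1) * (ωs (k+1) - ωs k) + (ωs (k+1) - ωs k) * ωs k)) := by
            rw [hℓh]
            refine mul_le_mul_of_nonneg_left ?_ (hℓh ▸ hℓ0)
            calc ‖B *ᵥ _‖ ≤ matNorm B * ‖_‖ := norm_mulVec_le _ _
              _ ≤ b * (ωs (k+1) * (ωs (k+1) - ωs k) + (ωs (k+1) - ωs k) * ωs k) := by
                  rw [hb]
                  exact mul_le_mul_of_nonneg_left hsum (hb ▸ hb0)
        _ = ωs (k+2) - ωs (k+1) := by
            rw [hωsS (k+1), hωsS k, hc, hd]; ring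
  have htel : ∀ k m, k ≤ m → ‖xseq m - xseq k‖ ≤ ωs m - ωs k := by
    intro k m hkm
    induction m, hkm using Nat.le_induction with
    | base => simp
    | succ m hm ih =>
      calc ‖xseq (m+1) - xseq k‖
          ≤ ‖xseq (m+1) - xseq m‖ + ‖xseq m - xseq k‖ := by
            have := norm_add_le (xseq (m+1) - xseq m) (xseq m - xseq k)
            simpa [sub_add_sub_cancel] using this
        _ ≤ (ωs (m+1) - ωs m) + (ωs m - ωs k) := add_le_add (hdiffbd m) ih
        _ = ωs (m+1) - ωs k := by ring
  -- convergence
  have hbdd : BddAbove (Set.range ωs) := ⟨ω, by rintro _ ⟨k, rfl⟩; exact hωs_le k⟩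
  set wl : ℝ := ⨆ k, ωs k with hwl
  have hωs_tendsto : Filter.Tendsto ωs Filter.atTop (nhds wl) :=
    tendsto_atTop_ciSup hωs_mono hbdd
  have hωs_le_wl : ∀ k, ωs k ≤ wl := fun k => le_ciSup hbdd k
  have hwl_le : wl ≤ ω := ciSup_le hωs_le
  have hcauchy : CauchySeq xseq := by
    refine cauchySeq_of_le_tendsto_0 (fun N => wl - ωs N) ?_ ?_
    · intro p q N hNp hNq
      rcases le_total p q with hpq | hpq
      · rw [dist_eq_norm, norm_sub_rev]
        calc ‖xseq q - xseq p‖ ≤ ωs q - ωs p := htel p q hpq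
          _ ≤ wl - ωs N := by
              have := hωs_le_wl q
              have := hωs_mono hNp
              linarith
      · rw [dist_eq_norm]
        calc ‖xseq p - xseq q‖ ≤ ωs p - ωs q := htel q p hpq
          _ ≤ wl - ωs N := by
              have := hωs_le_wl p
              have := hωs_mono hNq
              linarith
    · have : Filter.Tendsto (fun N => wl - ωs N) Filter.atTop (nhds (wl - wl)) :=
        Filter.Tendsto.sub tendsto_const_nhds hωs_tendsto
      simpa using this
  obtain ⟨x, hx⟩ := cauchySeq_tendsto_of_complete hcauchy
  -- the limit is a fixed point
  have hcont : Continuous (fun y : Fin n → ℝ =>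
      xh + Lh⁻¹ *ᵥ (B *ᵥ kron (y - xh) (y - xh) - r)) := by
    have c1 : Continuous fun y : Fin n → ℝ => y - xh := continuous_id.sub continuous_const
    have c2 : Continuous fun y : Fin n → ℝ => kron (y - xh) (y - xh) :=
      continuous_kron_diag.comp c1
    have c3 : Continuous fun y : Fin n → ℝ => B *ᵥ kron (y - xh) (y - xh) :=
      (continuous_mulVec B).comp c2
    have c4 : Continuous fun y : Fin n → ℝ => B *ᵥ kron (y - xh) (y - xh) - r :=
      c3.sub continuous_const
    exact continuous_const.add ((continuous_mulVec Lh⁻¹).comp c4)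
  have hGx : x = xh + Lh⁻¹ *ᵥ (B *ᵥ kron (x - xh) (x - xh) - r) := by
    have h1 : Filter.Tendsto (fun k => xseq (k + 1)) Filter.atTop (nhds x) :=
      hx.comp (Filter.tendsto_add_atTop_nat 1)
    simp only [hiter] at h1
    have h2 : Filter.Tendsto
        (fun k => xh + Lh⁻¹ *ᵥ (B *ᵥ kron (xseq k - xh) (xseq k - xh) - r))
        Filter.atTop (nhds (xh + Lh⁻¹ *ᵥ (B *ᵥ kron (x - xh) (x - xh) - r))) :=
      (hcont.tendsto x).comp hx
    exact tendsto_nhds_unique h1 h2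
  have hxGx : x = G x := by
    have h3 := keyG (x - xh)
    rw [show xh + (x - xh) = x from by abel] at h3
    rw [← h3] at hGx
    exact hGx
  have hLiF : Lh⁻¹ *ᵥ (x - a - B *ᵥ kron x x) = 0 := by
    have h4 : x - Lh⁻¹ *ᵥ (x - a - B *ᵥ kron x x) = x := by
      conv_rhs => rw [hxGx]
    exact sub_eq_self.mp h4
  have hF0 : x - a - B *ᵥ kron x x = 0 := by
    have h5 : Lh *ᵥ (Lh⁻¹ *ᵥ (x - a - B *ᵥ kron x x)) = Lh *ᵥ 0 := by rw [hLiF]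
    rwa [Matrix.mulVec_mulVec, hLLi, Matrix.one_mulVec, Matrix.mulVec_zero] at h5
  have hxsol : x = a + B *ᵥ kron x x := by
    have h6 : x - (a + B *ᵥ kron x x) = 0 := by rw [← hF0]; abel
    exact sub_eq_zero.mp h6
  -- norm bound on x - xh
  have hxb : ‖x - xh‖ ≤ ω := by
    have h7 : Filter.Tendsto (fun k => ‖xseq k - xh‖) Filter.atTop (nhds ‖x - xh‖) :=
      ((hx.sub tendsto_const_nhds).norm)
    exact le_of_tendsto h7 (Filter.Eventually.of_forall fun k =>
      le_trans (hnormbd k) (hωs_le k))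
  have hxb' : ‖xh - x‖ ≤ ω := by rwa [norm_sub_rev]
  -- entrywise bounds
  have hxi : ∀ i, 0 < x i ∧ x i < e i := by
    intro i
    have hei : |xh i - x i| ≤ ω := by
      have := norm_le_pi_norm (xh - x) i
      rw [Real.norm_eq_abs] at this
      exact le_trans (le_of_eq (by simp)) (le_trans this hxb')
    have he1 : e i = 1 := by rw [he]
    have hexh : 1 - xh i ≤ ‖e - xh‖ := by
      have h8 := norm_le_pi_norm (e - xh) i
      rw [Real.norm_eq_abs] at h8
      have h9 : (e - xh) i = 1 - xh i := by simp [he1]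
      rw [h9] at h8
      exact le_trans (le_abs_self _) h8
    have hxhn : xh i ≤ ‖xh‖ := by
      have h10 := norm_le_pi_norm xh i
      rw [Real.norm_eq_abs] at h10
      exact le_trans (le_abs_self _) h10
    have habs := abs_le.mp hei
    constructor
    · linarith [habs.2]
    · rw [he1]; linarith [habs.1]
  refine ⟨⟨x, hxsol, hxi, ?_⟩, ?_⟩
  · rw [hωeq]; exact hxb'
  · intro xs huniq hxseq' hxsin
    have hxin : ∀ i, 0 ≤ x i ∧ x i < e i := fun i => ⟨(hxi i).1.le, (hxi i).2⟩
    have hxxs : x = xs := huniq x xs hxsol hxin hxseq' hxsin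
    rw [← hxxs, hωeq]
    exact hxb'

end
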